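/- Let R be a finite-dimensional algebra over an infinite field F with minimal CH-norm of degree n. Then every element a ∈ R satisfies a monic polynomial of degree n over F, and there is a nonempty Zariski-open set U ⊆ R such that every element of U does not satisfy any nonzero polynomial of degree < n. -/

import Mathlib

open TensorProduct

variable {F R ι : Type*}

/-- The polynomial function on `R` attached to a polynomial in the coordinates
along the basis `b`. -/
noncomputable def polyFun [Field F] [Ring R] [Algebra F R] [Fintype ι]
    (b : Module.Basis ι F R) (p : MvPolynomial ι F) : R → F :=
  fun r => MvPolynomial.eval (fun i => b.repr r i) p

/-- The abstract characteristic polynomial `χ_a(t) = N(t·1 - a)` of an element `a`,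
for the polynomial map attached to `p`. -/
noncomputable def charPolyOf [Field F] [Ring R] [Algebra F R] [Fintype ι]
    (b : Module.Basis ι F R) (p : MvPolynomial ι F) (a : R) : Polynomial F :=
  MvPolynomial.aeval
    (fun i => Polynomial.C (b.repr 1 i) * Polynomial.X - Polynomial.C (b.repr a i)) p

/-- `p` defines a Cayley–Hamilton norm of degree `n` on `R` (w.r.t. the basis `b`):
homogeneous of degree `n`, multiplicative, and every element satisfies its abstract
characteristic polynomial. -/
structure IsCHNorm [Field F] [Ring R] [Algebra F R] [Fintype ι]
    (b : Module.Basis ι F R) (n : ℕ) (p : MvPolynomial ι F) : Prop where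
  homog : ∀ (α : F) (r : R), polyFun b p (α • r) = α ^ n * polyFun b p r
  mult : ∀ x y : R, polyFun b p (x * y) = polyFun b p x * polyFun b p y
  ch : ∀ a : R, Polynomial.aeval a (charPolyOf b p a) = 0

/-- The generic element `x = Σ xᵢ aᵢ` of `R ⊗ K`, `K` the rational function field. -/
noncomputable def genElt [Field F] [Ring R] [Algebra F R] [Fintype ι] (b : Module.Basis ι F R) :
    FractionRing (MvPolynomial ι F) ⊗[F] R :=
  ∑ i, algebraMap (MvPolynomial ι F) (FractionRing (MvPolynomial ι F)) (MvPolynomial.X i)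
    ⊗ₜ[F] b i

open Matrix Submodule Module in
lemma exists_det_ne_zero {K : Type*} [Field K] {ι : Type*} [Fintype ι]
    {n : ℕ} {w : Fin n → ι → K} (hw : LinearIndependent K w) :
    ∃ g : Fin n → ι, (Matrix.of fun j k => w j (g k)).det ≠ 0 := by
  classical
  set W : Matrix (Fin n) ι K := Matrix.of w with hW
  have hrank : W.rank = n := hw.rank_matrix.trans (Fintype.card_fin n)
  have hspan : span K (Set.range Wᵀ) = ⊤ := by
    apply Submodule.eq_top_of_finrank_eq
    have := W.rank_eq_finrank_span_cols
    rw [hrank] at this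
    rw [Module.finrank_fin_fun]; exact this.symm
  obtain ⟨s, hs_sub, hs_span, hs_ind⟩ := exists_linearIndependent K (Set.range Wᵀ)
  have hfin : s.Finite := (Set.finite_range Wᵀ).subset hs_sub
  haveI : Fintype s := hfin.fintype
  have hb : span K (Set.range ((↑) : s → (Fin n → K))) = ⊤ := by
    rw [Subtype.range_coe]; rw [hs_span, hspan]
  let bs : Module.Basis s K (Fin n → K) := Basis.mk hs_ind (by rw [hb])
  have hcard : Fintype.card s = n := by
    have := Module.finrank_eq_card_basis bs
    simpa using this.symm
  let e : Fin n ≃ s := (Fintype.equivFinOfCardEq hcard).symm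
  have hchoice : ∀ k : Fin n, ∃ i : ι, Wᵀ i = (e k : Fin n → K) := fun k => hs_sub (e k).2
  choose g hg using hchoice
  refine ⟨g, ?_⟩
  have hM : (Matrix.of fun j k => w j (g k))ᵀ = fun k => ((e k : Fin n → K)) := by
    funext k j
    have := congrFun (hg k) j
    simpa [Matrix.transpose, hW] using this
  have hind : LinearIndependent K (fun k => (Matrix.of fun j k => w j (g k))ᵀ k) := by
    rw [hM]
    exact hs_ind.comp e e.injective
  have hu := Matrix.linearIndependent_cols_iff_isUnit.mp hind
  rw [Matrix.isUnit_iff_isUnit_det] at hu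
  exact hu.ne_zero

open Polynomial in
lemma linearIndependent_pow' {K S : Type*} [Field K] [Ring S] [Algebra K S] (x : S) :
    LinearIndependent K fun i : Fin (minpoly K x).natDegree => x ^ (i : ℕ) := by
  by_cases h : IsIntegral K x; swap
  · rw [minpoly.eq_zero h, natDegree_zero]
    exact linearIndependent_empty_type
  refine Fintype.linearIndependent_iff.2 fun g hg i => ?_
  simp_rw [Algebra.smul_def, ← aeval_monomial, ← map_sum] at hg
  apply (fun hn0 => (minpoly.degree_le_of_ne_zero K x (mt (fun h0 => ?_) hn0) hg).not_gt).mtr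
  · simp_rw [← C_mul_X_pow_eq_monomial]
    exact (degree_eq_natDegree <| minpoly.ne_zero h).symm ▸ degree_sum_fin_lt _
  · apply_fun lcoeff K i at h0
    simp_rw [map_sum, lcoeff_apply, coeff_monomial, Fin.val_eq_val, Finset.sum_ite_eq'] at h0
    exact (if_pos <| Finset.mem_univ _).symm.trans h0


set_option maxHeartbeats 1000000 in
set_option synthInstance.maxHeartbeats 400000 in
/-- If `n` is the degree of the minimal CH-norm (= degree of the minimal polynomial of the
generic element), every `a ∈ R` satisfies a monic polynomial of degree `n` over `F`, and
there is a nonempty Zariski-open set (the nonvanishing locus of a nonzero polynomial `u` in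
the coordinates) on which no element satisfies a nonzero polynomial of degree `< n`. -/
theorem stmt9 [Field F] [Infinite F] [Ring R] [Algebra F R] [FiniteDimensional F R]
    [Fintype ι] (b : Module.Basis ι F R) :
    (∀ a : R, ∃ q : Polynomial F, q.Monic ∧
      q.natDegree = (minpoly (FractionRing (MvPolynomial ι F)) (genElt b)).natDegree ∧
      Polynomial.aeval a q = 0) ∧
    ∃ u : MvPolynomial ι F, u ≠ 0 ∧
      ∀ a : R, MvPolynomial.eval (fun i => b.repr a i) u ≠ 0 →
        ∀ q : Polynomial F, q ≠ 0 →
          q.natDegree < (minpoly (FractionRing (MvPolynomial ι F)) (genElt b)).natDegree →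
          Polynomial.aeval a q ≠ 0 := by
  classical
  set A := MvPolynomial ι F with hA
  set K := FractionRing (MvPolynomial ι F) with hK
  set x : K ⊗[F] R := genElt b with hx
  set x' : A ⊗[F] R := ∑ i, MvPolynomial.X i ⊗ₜ[F] b i with hx'
  set Φ : A ⊗[F] R →ₐ[F] K ⊗[F] R :=
    Algebra.TensorProduct.map (IsScalarTower.toAlgHom F A K) (AlgHom.id F R) with hΦ
  have hΦtmul : ∀ (c : A) (m : R), Φ (c ⊗ₜ[F] m) = algebraMap A K c ⊗ₜ[F] m := by
    intro c m; simp [hΦ]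
  have hΦx : Φ x' = x := by
    rw [hx', hx, genElt, map_sum]
    exact Finset.sum_congr rfl fun i _ => hΦtmul _ _
  have hΦinj : Function.Injective Φ := by
    have h1 : Function.Injective ((IsScalarTower.toAlgHom F A K).toLinearMap) :=
      IsFractionRing.injective A K
    have h2 := Module.Flat.rTensor_preserves_injective_linearMap
      (M := R) (IsScalarTower.toAlgHom F A K).toLinearMap h1
    have heq : Φ.toLinearMap = LinearMap.rTensor R (IsScalarTower.toAlgHom F A K).toLinearMap :=
      TensorProduct.ext' fun c m => by simp [hΦ]
    have h3 : Function.Injective Φ.toLinearMap := heq ▸ h2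
    exact h3
  have hxint : IsIntegral K x := IsIntegral.of_finite K x
  set μ := minpoly K x with hμ
  set n := μ.natDegree with hn
  have hcomp : Φ.toRingHom.comp (algebraMap A (A ⊗[F] R)) =
      (algebraMap K (K ⊗[F] R)).comp (algebraMap A K) := by
    refine RingHom.ext fun c => ?_
    simp only [RingHom.comp_apply]
    show Φ (algebraMap A (A ⊗[F] R) c) = _
    rw [Algebra.TensorProduct.algebraMap_apply, hΦtmul]
    rfl
  have key : ∀ P : Polynomial A,
      Φ (Polynomial.aeval x' P) = Polynomial.aeval x (P.map (algebraMap A K)) := by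
    intro P
    rw [Polynomial.aeval_def, Polynomial.aeval_def, Polynomial.eval₂_map]
    show Φ.toRingHom (Polynomial.eval₂ (algebraMap A (A ⊗[F] R)) x' P) = _
    rw [Polynomial.hom_eval₂, hcomp, show Φ.toRingHom x' = x from hΦx]
  have hx'int : IsIntegral A x' := IsIntegral.of_finite A x'
  obtain ⟨f, hfmonic, hf0⟩ := hx'int
  have hdvd : μ ∣ f.map (algebraMap A K) := by
    apply minpoly.dvd K x
    rw [← key f]
    rw [Polynomial.aeval_def] at *
    rw [hf0, map_zero]
  obtain ⟨P, hP⟩ := IsIntegrallyClosed.eq_map_mul_C_of_dvd K hfmonic hdvd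
  have hμmonic : μ.Monic := minpoly.monic hxint
  rw [hμmonic.leadingCoeff, Polynomial.C_1, mul_one] at hP
  have hAKinj : Function.Injective (algebraMap A K) := IsFractionRing.injective A K
  have hPmonic : P.Monic := hAKinj.monic_map_iff.mpr (hP ▸ hμmonic)
  have hPdeg : P.natDegree = n := by
    rw [hn, ← hP, Polynomial.natDegree_map_eq_of_injective hAKinj]
  -- specialization machinery
  have spec : ∀ a : R, ∃ ψ : A ⊗[F] R →ₐ[F] R, ψ x' = a ∧
      (ψ.toRingHom.comp (algebraMap A (A ⊗[F] R)) =
        (algebraMap F R).comp (MvPolynomial.eval fun i => b.repr a i)) ∧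
      (∀ (c : A) (m : R), ψ (c ⊗ₜ[F] m) =
        algebraMap F R (MvPolynomial.eval (fun i => b.repr a i) c) * m) := by
    intro a
    set φ : A →+* F := MvPolynomial.eval (fun i => b.repr a i) with hφ
    set φalg : A →ₐ[F] F := MvPolynomial.aeval (fun i => b.repr a i) with hφalg
    set φ' : A →ₐ[F] R := (Algebra.ofId F R).comp φalg with hφ'
    have hφφ' : ∀ c : A, φ' c = algebraMap F R (φ c) := by
      intro c
      have h1 : φalg c = φ c := by
        rw [hφalg, hφ, MvPolynomial.aeval_def, Algebra.algebraMap_self]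
        rfl
      rw [hφ', AlgHom.comp_apply, h1]
      rfl
    refine ⟨Algebra.TensorProduct.lift φ' (AlgHom.id F R)
      (fun c r => by rw [hφφ']; exact Algebra.commute_algebraMap_left _ _), ?_, ?_, ?_⟩
    · rw [hx', map_sum]
      have : ∀ i, Algebra.TensorProduct.lift φ' (AlgHom.id F R)
          (fun c r => by rw [hφφ']; exact Algebra.commute_algebraMap_left _ _)
          (MvPolynomial.X i ⊗ₜ[F] b i) = b.repr a i • b i := by
        intro i
        rw [Algebra.TensorProduct.lift_tmul, hφφ']
        simp only [hφ, Algebra.smul_def, AlgHom.coe_id, id_eq]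
        rw [MvPolynomial.eval_X]
      rw [Finset.sum_congr rfl fun i _ => this i]
      exact b.sum_repr a
    · refine RingHom.ext fun c => ?_
      simp only [RingHom.comp_apply]
      show Algebra.TensorProduct.lift φ' (AlgHom.id F R) _ (algebraMap A (A ⊗[F] R) c) = _
      rw [Algebra.TensorProduct.algebraMap_apply, Algebra.TensorProduct.lift_tmul, hφφ']
      simp
    · intro c m
      rw [Algebra.TensorProduct.lift_tmul, hφφ']
      rfl
  constructor
  · -- part 1
    intro a
    obtain ⟨ψ, hψx, hψcomp, hψtmul⟩ := spec a
    set φ : A →+* F := MvPolynomial.eval (fun i => b.repr a i) with hφ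
    refine ⟨P.map φ, hPmonic.map φ, by rw [hPmonic.natDegree_map, hPdeg], ?_⟩
    have h1 : Polynomial.aeval a (P.map φ) = ψ (Polynomial.aeval x' P) := by
      rw [Polynomial.aeval_def, Polynomial.eval₂_map, Polynomial.aeval_def]
      show _ = ψ.toRingHom (Polynomial.eval₂ (algebraMap A (A ⊗[F] R)) x' P)
      rw [Polynomial.hom_eval₂, hψcomp, show ψ.toRingHom x' = a from hψx]
    have h2 : Polynomial.aeval x' P = 0 := by
      apply hΦinj
      rw [key, hP, map_zero]
      exact minpoly.aeval K x
    rw [h1, h2, map_zero]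
  · -- part 2
    set bA : Module.Basis ι A (A ⊗[F] R) := b.baseChange A with hbA
    set bK : Module.Basis ι K (K ⊗[F] R) := b.baseChange K with hbK
    have hrepr : ∀ (z : A ⊗[F] R) (i : ι), bK.repr (Φ z) i = algebraMap A K (bA.repr z i) := by
      intro z i
      induction z using TensorProduct.induction_on with
      | zero => simp
      | tmul c m =>
        rw [hΦtmul, hbA, hbK, Module.Basis.baseChange_repr_tmul, Module.Basis.baseChange_repr_tmul,
          Algebra.smul_def, Algebra.smul_def, map_mul, ← IsScalarTower.algebraMap_apply]
      | add y z hy hz => simp only [map_add, Finsupp.add_apply, hy, hz]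
    have li : LinearIndependent K (fun j : Fin n => x ^ (j : ℕ)) := linearIndependent_pow' x
    set w : Fin n → ι → K := fun j i => bK.repr (x ^ (j : ℕ)) i with hw
    have hwli : LinearIndependent K w := by
      rw [Fintype.linearIndependent_iff] at li ⊢
      intro g hg j
      refine li g ?_ j
      apply bK.repr.injective
      rw [map_zero]
      ext i
      have h1 := congrFun hg i
      simpa [hw, map_sum] using h1
    obtain ⟨g, hdet⟩ := exists_det_ne_zero hwli
    set M : Matrix (Fin n) (Fin n) A := Matrix.of (fun j k => bA.repr (x' ^ (j : ℕ)) (g k)) with hM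
    have hMmap : M.map (algebraMap A K) = Matrix.of (fun j k => w j (g k)) := by
      ext j k
      simp only [hM, Matrix.map_apply, Matrix.of_apply, hw]
      rw [show (x : K ⊗[F] R) ^ (j : ℕ) = Φ (x' ^ (j : ℕ)) by rw [map_pow, hΦx], hrepr]
    have hu : M.det ≠ 0 := by
      intro h
      apply hdet
      rw [← hMmap, ← RingHom.mapMatrix_apply, ← RingHom.map_det, h, map_zero]
    refine ⟨M.det, hu, ?_⟩
    intro a ha q hq hqdeg hq0
    obtain ⟨ψ, hψx, hψcomp, hψtmul⟩ := spec a
    set φ : A →+* F := MvPolynomial.eval (fun i => b.repr a i) with hφ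
    have hrepr2 : ∀ (z : A ⊗[F] R) (i : ι), b.repr (ψ z) i = φ (bA.repr z i) := by
      intro z i
      induction z using TensorProduct.induction_on with
      | zero => simp
      | tmul c m =>
        rw [hψtmul, hbA, Module.Basis.baseChange_repr_tmul, ← Algebra.smul_def, map_smul,
          Algebra.smul_def, map_mul]
        simp only [Finsupp.smul_apply, Algebra.smul_def]
        rw [MvPolynomial.algebraMap_eq, MvPolynomial.eval_C, Algebra.algebraMap_self_apply]
        exact mul_comm _ _
      | add y z hy hz => simp only [map_add, Finsupp.add_apply, hy, hz]
    have hrepr3 : ∀ (j : Fin n) (i : ι), b.repr (a ^ (j : ℕ)) i = φ (bA.repr (x' ^ (j : ℕ)) i) := by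
      intro j i
      rw [show (a : R) ^ (j : ℕ) = ψ (x' ^ (j : ℕ)) by rw [map_pow, hψx], hrepr2]
    set N : Matrix (Fin n) (Fin n) F := M.map φ with hN
    have hNdet : N.det ≠ 0 := by
      have h1 : N.det = φ M.det := by rw [hN, ← RingHom.mapMatrix_apply, ← RingHom.map_det]
      rw [h1]
      exact ha
    have hrows : LinearIndependent F (fun j : Fin n => N j) :=
      Matrix.linearIndependent_rows_iff_isUnit.mpr
        ((Matrix.isUnit_iff_isUnit_det N).mpr (isUnit_iff_ne_zero.mpr hNdet))
    have hpow : LinearIndependent F (fun j : Fin n => a ^ (j : ℕ)) := by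
      rw [Fintype.linearIndependent_iff] at hrows ⊢
      intro c hc j
      refine hrows c ?_ j
      funext k
      have h2 : ∑ j : Fin n, c j * b.repr (a ^ (j : ℕ)) (g k) = 0 := by
        have h3 := congrArg (fun z => b.repr z (g k)) hc
        simpa [map_sum] using h3
      have h4 : (∑ j : Fin n, c j • N j) k = ∑ j : Fin n, c j * N j k := by
        simp [Finset.sum_apply]
      rw [h4]
      rw [show (0 : Fin n → F) k = 0 from rfl]
      rw [← h2]
      refine Finset.sum_congr rfl fun j _ => ?_
      rw [hN, hM]
      simp only [Matrix.map_apply, Matrix.of_apply]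
      rw [hrepr3]
    have hsum : ∑ j : Fin n, q.coeff (j : ℕ) • a ^ (j : ℕ) = 0 := by
      have h5 := Polynomial.aeval_eq_sum_range' hqdeg a
      rw [hq0] at h5
      rw [← Fin.sum_univ_eq_sum_range (fun i => q.coeff i • a ^ i) n] at h5
      exact h5.symm
    rw [Fintype.linearIndependent_iff] at hpow
    have hcoeff := hpow (fun j => q.coeff (j : ℕ)) hsum
    apply hq
    ext j
    rcases lt_or_ge j n with hj | hj
    · simpa using hcoeff ⟨j, hj⟩
    · simp [Polynomial.coeff_eq_zero_of_natDegree_lt (lt_of_lt_of_le hqdeg hj)]
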